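/- Let T̃ : ℝ² → ℝ be continuously differentiable with compact support, let φ : ℝ² → ℝ be twice continuously differentiable with bounded gradient ∇φ, and fix k, l ∈ ℝ². For z ∈ ℂ define the real-valued perturbation φ_z(x) = z e^{i x·l} + conj(z) e^{−i x·l}, and define G : ℂ → ℂ by G(z) = (2π)⁻¹ ∫_{ℝ²} e^{−i k·x} T̃(x − ∇φ(x) − ∇φ_z(x)) dx. Define A^q(x) = (∂T̃/∂x_q)(x − ∇φ(x)) for q = 1, 2. Then the conjugate Wirtinger-type derivative (∂/∂(re z) − i ∂/∂(im z)) G evaluated at z = 0 equals −2 Σ_{q=1,2} i l_q Â^q(k−l), where Â^q is the Fourier transform of A^q. -/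

import Mathlib

open MeasureTheory
open scoped RealInnerProductSpace

noncomputable section

/-- `ℝ²` as a Euclidean (inner product) space. -/
abbrev E2 := EuclideanSpace ℝ (Fin 2)

/-- The Fourier transform with the paper's normalization:
`f̂(l) = (2π)⁻¹ ∫ e^{-i x·l} f(x) dx`. -/
noncomputable def ft (f : E2 → ℂ) (l : E2) : ℂ :=
  (2 * Real.pi)⁻¹ • ∫ x : E2, Complex.exp (-(Complex.I * (⟪x, l⟫ : ℂ))) * f x

/-- Fourier transform of a real-valued function. -/
noncomputable def ftR (f : E2 → ℝ) (l : E2) : ℂ := ft (fun x => (f x : ℂ)) l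

/-- The `q`-th partial derivative of `f : ℝ² → ℝ`. -/
noncomputable def pderiv2 (q : Fin 2) (f : E2 → ℝ) (x : E2) : ℝ :=
  fderiv ℝ f x (EuclideanSpace.single q 1)

/-- The anti-lensed gradient field `A^q(x) = (∂T/∂x_q)(x - ∇φ(x))`. -/
noncomputable def Aq (T φ : E2 → ℝ) (q : Fin 2) (x : E2) : ℝ :=
  pderiv2 q T (x - gradient φ x)

/-- The real-valued perturbation `φ_z(x) = z e^{i x·l} + conj(z) e^{-i x·l}`. -/
noncomputable def pert (l : E2) (z : ℂ) (x : E2) : ℝ :=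
  (z * Complex.exp (Complex.I * (⟪x, l⟫ : ℂ)) +
    (starRingEnd ℂ) z * Complex.exp (-(Complex.I * (⟪x, l⟫ : ℂ)))).re

/-- The perturbed anti-lensed Fourier coefficient
`G(z) = (2π)⁻¹ ∫ e^{-i k·x} T̃(x - ∇φ(x) - ∇φ_z(x)) dx`. -/
noncomputable def Gfun (T φ : E2 → ℝ) (k l : E2) (z : ℂ) : ℂ :=
  (2 * Real.pi)⁻¹ • ∫ x : E2,
    Complex.exp (-(Complex.I * (⟪x, k⟫ : ℂ))) *
      ((T (x - gradient φ x - gradient (pert l z) x) : ℝ) : ℂ)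

open Metric

lemma pert_eq (l : E2) (z : ℂ) (x : E2) :
    pert l z x = 2 * (z.re * Real.cos ⟪x, l⟫ - z.im * Real.sin ⟪x, l⟫) := by
  unfold pert
  have h1 : Complex.exp (Complex.I * (⟪x, l⟫ : ℂ))
      = (Real.cos ⟪x, l⟫ : ℂ) + (Real.sin ⟪x, l⟫ : ℂ) * Complex.I := by
    rw [mul_comm, Complex.exp_mul_I, Complex.ofReal_cos, Complex.ofReal_sin]
  have h2 : Complex.exp (-(Complex.I * (⟪x, l⟫ : ℂ)))
      = (Real.cos ⟪x, l⟫ : ℂ) - (Real.sin ⟪x, l⟫ : ℂ) * Complex.I := by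
    rw [show -(Complex.I * (⟪x, l⟫ : ℂ)) = (-(⟪x, l⟫ : ℂ)) * Complex.I by ring,
      Complex.exp_mul_I, Complex.cos_neg, Complex.sin_neg, Complex.ofReal_cos,
      Complex.ofReal_sin]
    ring
  rw [h1, h2]
  simp only [Complex.add_re, Complex.mul_re, Complex.sub_re, Complex.sub_im,
    Complex.ofReal_re, Complex.ofReal_im, Complex.mul_im, Complex.I_re, Complex.I_im,
    Complex.conj_re, Complex.conj_im, Complex.add_im]
  ring

lemma hasGradientAt_pert (l : E2) (z : ℂ) (x : E2) :
    HasGradientAt (pert l z)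
      ((2 * (-(z.re) * Real.sin ⟪x, l⟫ - z.im * Real.cos ⟪x, l⟫)) • l) x := by
  have hfun : pert l z = fun y : E2 => 2 * (z.re * Real.cos ⟪y, l⟫ - z.im * Real.sin ⟪y, l⟫) :=
    funext fun y => pert_eq l z y
  rw [hfun, hasGradientAt_iff_hasFDerivAt]
  have hinner : HasFDerivAt (fun y : E2 => (⟪y, l⟫ : ℝ))
      (InnerProductSpace.toDual ℝ E2 l) x := by
    have : (fun y : E2 => (⟪y, l⟫ : ℝ)) = fun y => (InnerProductSpace.toDual ℝ E2 l) y := by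
      funext y
      rw [InnerProductSpace.toDual_apply_apply, real_inner_comm]
    rw [this]
    exact (InnerProductSpace.toDual ℝ E2 l).hasFDerivAt
  have hd : HasDerivAt (fun θ : ℝ => 2 * (z.re * Real.cos θ - z.im * Real.sin θ))
      (2 * (-(z.re) * Real.sin ⟪x, l⟫ - z.im * Real.cos ⟪x, l⟫)) (⟪x, l⟫ : ℝ) := by
    have := ((Real.hasDerivAt_cos (⟪x, l⟫:ℝ)).const_mul z.re).sub
      ((Real.hasDerivAt_sin (⟪x, l⟫:ℝ)).const_mul z.im)
    have h2 := this.const_mul (2:ℝ)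
    exact h2.congr_deriv (by ring)
  have h := hd.comp_hasFDerivAt x hinner
  refine h.congr_fderiv ?_
  ext v
  rw [ContinuousLinearMap.smul_apply, InnerProductSpace.toDual_apply_apply,
    InnerProductSpace.toDual_apply_apply, real_inner_smul_left]
  simp only [smul_eq_mul]

lemma gradient_pert (l : E2) (z : ℂ) (x : E2) :
    gradient (pert l z) x
      = (2 * (-(z.re) * Real.sin ⟪x, l⟫ - z.im * Real.cos ⟪x, l⟫)) • l :=
  (hasGradientAt_pert l z x).gradient

lemma vec_decomp (l : E2) : (∑ q : Fin 2, l q • EuclideanSpace.single q (1:ℝ)) = l := by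
  ext i
  simp [Fin.sum_univ_two, EuclideanSpace.single_apply]
  fin_cases i <;> simp

lemma clm_apply_decomp (L : E2 →L[ℝ] ℝ) (l : E2) :
    L l = ∑ q : Fin 2, l q * L (EuclideanSpace.single q (1:ℝ)) := by
  rw [← vec_decomp l, map_sum]
  simp only [ContinuousLinearMap.map_smul, smul_eq_mul]
  rw [vec_decomp l]

lemma trig_id (b Bc : ℝ) (E : ℂ) :
    E * ((2 * Real.sin b * Bc : ℝ) : ℂ) - Complex.I * (E * ((2 * Real.cos b * Bc : ℝ) : ℂ))
      = (-2 * Complex.I) * (E * Complex.exp ((b : ℂ) * Complex.I)) * (Bc : ℂ) := by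
  rw [Complex.exp_mul_I, ← Complex.ofReal_cos, ← Complex.ofReal_sin]
  push_cast
  linear_combination (2 * E * Complex.sin (b:ℂ) * (Bc : ℂ)) * Complex.I_sq

lemma key (T : E2 → ℝ) (hT : ContDiff ℝ 1 T) (hTc : HasCompactSupport T)
    (φ : E2 → ℝ) (hφ : ContDiff ℝ 2 φ) (Mφ : ℝ) (hbφ : ∀ x, ‖gradient φ x‖ ≤ Mφ)
    (k l : E2) (s : E2 → ℝ) (hs : Continuous s) (hsb : ∀ x, |s x| ≤ 2) :
    HasDerivAt (fun t : ℝ => ∫ x : E2, Complex.exp (-(Complex.I * (⟪x, k⟫ : ℂ))) *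
        ((T (x - gradient φ x + (t * s x) • l) : ℝ) : ℂ))
      (∫ x : E2, Complex.exp (-(Complex.I * (⟪x, k⟫ : ℂ))) *
        (((s x * (fderiv ℝ T (x - gradient φ x) l)) : ℝ) : ℂ)) 0 := by
  have hgc : Continuous (gradient φ) := by
    have : gradient φ = fun x => (InnerProductSpace.toDual ℝ E2).symm (fderiv ℝ φ x) := rfl
    rw [this]
    exact (InnerProductSpace.toDual ℝ E2).symm.continuous.comp
      (hφ.continuous_fderiv (by norm_num))
  have hMφ0 : 0 ≤ Mφ := le_trans (norm_nonneg _) (hbφ 0)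
  obtain ⟨R, hR0, hRsub⟩ : ∃ R, 0 ≤ R ∧ tsupport T ⊆ closedBall (0:E2) R := by
    obtain ⟨R, hR⟩ := hTc.isBounded.subset_closedBall (0:E2)
    exact ⟨max R 0, le_max_right _ _, hR.trans (closedBall_subset_closedBall (le_max_left _ _))⟩
  obtain ⟨C, hC⟩ : ∃ C, ∀ y, ‖fderiv ℝ T y‖ ≤ C :=
    (hTc.fderiv (𝕜 := ℝ)).exists_bound_of_continuous (hT.continuous_fderiv one_ne_zero)
  have hC0 : 0 ≤ C := le_trans (norm_nonneg _) (hC 0)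
  set e : E2 → ℂ := fun x => Complex.exp (-(Complex.I * (⟪x, k⟫ : ℂ))) with he
  have hec : Continuous e := by
    rw [he]
    have hin : Continuous fun x : E2 => (⟪x, k⟫ : ℝ) := continuous_id.inner continuous_const
    exact Complex.continuous_exp.comp
      ((continuous_const.mul (Complex.continuous_ofReal.comp hin)).neg)
  have hen : ∀ x, ‖e x‖ = 1 := by
    intro x
    rw [he]
    simp [Complex.norm_exp]
  set F : ℝ → E2 → ℂ := fun t x => e x * ((T (x - gradient φ x + (t * s x) • l) : ℝ) : ℂ)
    with hF
  set F' : ℝ → E2 → ℂ :=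
    fun t x => e x * (((s x * (fderiv ℝ T (x - gradient φ x + (t * s x) • l) l)) : ℝ) : ℂ)
    with hF'
  set ρ : ℝ := R + Mφ + 2 * ‖l‖ with hρ
  have harg : ∀ (x : E2) (t : ℝ), |t| ≤ 1 → ρ < ‖x‖ →
      x - gradient φ x + (t * s x) • l ∉ tsupport T := by
    intro x t ht hx hmem
    have h1 : ‖x - gradient φ x + (t * s x) • l‖ ≤ R := by
      have := hRsub hmem
      simpa using mem_closedBall_zero_iff.1 this
    have h5 : ‖x‖ - ‖gradient φ x‖ ≤ ‖x - gradient φ x‖ := by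
      linarith [norm_sub_norm_le x (gradient φ x)]
    have h6 : ‖x - gradient φ x‖ - ‖(t * s x) • l‖
        ≤ ‖x - gradient φ x + (t * s x) • l‖ := by
      have := norm_add_le (x - gradient φ x + (t * s x) • l) (-(t * s x) • l)
      simp only [neg_smul, add_neg_cancel_right] at this
      simpa [norm_neg] using this
    have hsmul : ‖(t * s x) • l‖ ≤ 2 * ‖l‖ := by
      rw [norm_smul]
      have h7 : |t * s x| ≤ 2 := by
        rw [abs_mul]
        calc |t| * |s x| ≤ 1 * 2 := mul_le_mul ht (hsb x) (abs_nonneg _) zero_le_one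
        _ = 2 := by ring
      have h8 : ‖t * s x‖ ≤ 2 := h7
      nlinarith [norm_nonneg l]
    have := hbφ x
    rw [hρ] at hx
    linarith
  have key := hasDerivAt_integral_of_dominated_loc_of_deriv_le (μ := volume)
    (F := F) (F' := F') (x₀ := (0:ℝ))
    (bound := (closedBall (0:E2) ρ).indicator (fun _ => 2 * (C * ‖l‖)))
    (Metric.ball_mem_nhds 0 one_pos)
    (by
      filter_upwards with t
      apply Continuous.aestronglyMeasurable
      apply hec.mul
      have : Continuous fun x : E2 => x - gradient φ x + (t * s x) • l :=
        (continuous_id.sub hgc).add ((continuous_const.mul hs).smul continuous_const)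
      exact Complex.continuous_ofReal.comp (hT.continuous.comp this))
    (by
      apply Continuous.integrable_of_hasCompactSupport
      · apply hec.mul
        have : Continuous fun x : E2 => x - gradient φ x + ((0:ℝ) * s x) • l :=
          (continuous_id.sub hgc).add ((continuous_const.mul hs).smul continuous_const)
        exact Complex.continuous_ofReal.comp (hT.continuous.comp this)
      · apply HasCompactSupport.intro (isCompact_closedBall (0:E2) ρ)
        intro x hx
        have hx' : ρ < ‖x‖ := by
          simpa [mem_closedBall_zero_iff] using hx
        have := harg x 0 (by norm_num) hx'
        rw [hF]
        simp only
        rw [image_eq_zero_of_notMem_tsupport this]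
        simp)
    (by
      apply Continuous.aestronglyMeasurable
      apply hec.mul
      have harg : Continuous fun x : E2 => x - gradient φ x + ((0:ℝ) * s x) • l :=
        (continuous_id.sub hgc).add ((continuous_const.mul hs).smul continuous_const)
      have : Continuous fun x : E2 => fderiv ℝ T (x - gradient φ x + ((0:ℝ) * s x) • l) l :=
        ((hT.continuous_fderiv one_ne_zero).comp harg).clm_apply continuous_const
      exact Complex.continuous_ofReal.comp (hs.mul this))
    (by
      filter_upwards with x
      intro t ht
      by_cases hx : x ∈ closedBall (0:E2) ρ
      · rw [Set.indicator_of_mem hx]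
        rw [hF']
        simp only
        rw [norm_mul, hen, one_mul, Complex.norm_real, norm_mul]
        have h1 : ‖fderiv ℝ T (x - gradient φ x + (t * s x) • l) l‖ ≤ C * ‖l‖ :=
          le_trans ((fderiv ℝ T _).le_opNorm l)
            (mul_le_mul_of_nonneg_right (hC _) (norm_nonneg _))
        have h2 : ‖s x‖ ≤ 2 := hsb x
        exact mul_le_mul h2 h1 (norm_nonneg _) (by norm_num)
      · rw [Set.indicator_of_notMem hx]
        have hx' : ρ < ‖x‖ := by
          simpa [mem_closedBall_zero_iff] using hx
        have ht1 : |t| ≤ 1 := le_of_lt (by simpa [Real.dist_eq] using mem_ball_iff_norm.1 ht)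
        have hnm := harg x t ht1 hx'
        have : fderiv ℝ T (x - gradient φ x + (t * s x) • l) = 0 := by
          by_contra h
          exact hnm (support_fderiv_subset ℝ h)
        rw [hF']
        simp [this])
    (by
      rw [integrable_indicator_iff measurableSet_closedBall]
      exact integrableOn_const measure_closedBall_lt_top.ne)
    (by
      filter_upwards with x
      intro t ht
      have hc : HasDerivAt (fun t : ℝ => x - gradient φ x + (t * s x) • l) ((s x) • l) t := by
        have : (fun t : ℝ => x - gradient φ x + (t * s x) • l)
            = fun t : ℝ => x - gradient φ x + t • ((s x) • l) := by
          funext t; rw [smul_smul]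
        rw [this]
        exact ((hasDerivAt_const t (x - gradient φ x)).add
          ((hasDerivAt_id t).smul_const ((s x) • l))).congr_deriv (by simp)
      have hTd := ((hT.differentiable one_ne_zero) _).hasFDerivAt.comp_hasDerivAt t hc
      have := (Complex.ofRealCLM.hasFDerivAt.comp_hasDerivAt t hTd).const_mul (e x)
      refine this.congr_deriv ?_
      rw [hF']
      simp only [Complex.ofRealCLM_apply]
      rw [ContinuousLinearMap.map_smul, smul_eq_mul])
  have hres := key.2
  have heq : F' 0 = fun x : E2 => Complex.exp (-(Complex.I * (⟪x, k⟫ : ℂ))) *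
      (((s x * (fderiv ℝ T (x - gradient φ x) l)) : ℝ) : ℂ) := by
    funext x
    rw [hF', he]
    norm_num
  rw [heq] at hres
  exact hres

/-- Lemma "partialconj", second equation: the conjugate Wirtinger-type derivative
`(∂/∂(re z) - i ∂/∂(im z)) G` at `z = 0` equals `-2 ∑_q i l_q Â^q(k-l)`. -/
theorem stmt8 (T : E2 → ℝ) (hT : ContDiff ℝ 1 T) (hTc : HasCompactSupport T)
    (φ : E2 → ℝ) (hφ : ContDiff ℝ 2 φ)
    (Mφ : ℝ) (hbφ : ∀ x, ‖gradient φ x‖ ≤ Mφ)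
    (k l : E2) :
    deriv (fun t : ℝ => Gfun T φ k l (t : ℂ)) 0 -
        Complex.I * deriv (fun t : ℝ => Gfun T φ k l ((t : ℂ) * Complex.I)) 0
      = -2 * ∑ q : Fin 2, Complex.I * ((l q : ℝ) : ℂ) * ftR (Aq T φ q) (k - l) := by

  have hgc : Continuous (gradient φ) := by
    have : gradient φ = fun x => (InnerProductSpace.toDual ℝ E2).symm (fderiv ℝ φ x) := rfl
    rw [this]
    exact (InnerProductSpace.toDual ℝ E2).symm.continuous.comp (hφ.continuous_fderiv (by norm_num))
  have hMφ0 : 0 ≤ Mφ := le_trans (norm_nonneg _) (hbφ 0)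
  obtain ⟨R, hR0, hRsub⟩ : ∃ R, 0 ≤ R ∧ tsupport T ⊆ closedBall (0:E2) R := by
    obtain ⟨R, hR⟩ := hTc.isBounded.subset_closedBall (0:E2)
    exact ⟨max R 0, le_max_right _ _, hR.trans (closedBall_subset_closedBall (le_max_left _ _))⟩
  have hzero : ∀ x : E2, R + Mφ < ‖x‖ → fderiv ℝ T (x - gradient φ x) = 0 := by
    intro x hx
    by_contra h
    have hmem := hRsub (support_fderiv_subset ℝ h)
    have h1 : ‖x - gradient φ x‖ ≤ R := by simpa using mem_closedBall_zero_iff.1 hmem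
    have h2 : ‖x‖ - ‖gradient φ x‖ ≤ ‖x - gradient φ x‖ := by
      linarith [norm_sub_norm_le x (gradient φ x)]
    have := hbφ x
    linarith
  have hint : ∀ f : E2 → ℂ, Continuous f → (∀ x : E2, R + Mφ < ‖x‖ → f x = 0) →
      Integrable f volume := by
    intro f hc h0
    apply hc.integrable_of_hasCompactSupport
    exact HasCompactSupport.intro (isCompact_closedBall (0:E2) (R + Mφ))
      (fun x hx => h0 x (by simpa [mem_closedBall_zero_iff] using hx))
  have hfdc : Continuous fun x : E2 => fderiv ℝ T (x - gradient φ x) :=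
    (hT.continuous_fderiv one_ne_zero).comp (continuous_id.sub hgc)
  have hBc : Continuous fun x : E2 => fderiv ℝ T (x - gradient φ x) l :=
    hfdc.clm_apply continuous_const
  have hec : Continuous fun x : E2 => Complex.exp (-(Complex.I * (⟪x, k⟫ : ℂ))) := by
    have hin : Continuous fun x : E2 => (⟪x, k⟫ : ℝ) := continuous_id.inner continuous_const
    exact Complex.continuous_exp.comp
      ((continuous_const.mul (Complex.continuous_ofReal.comp hin)).neg)
  have heklc : Continuous fun x : E2 => Complex.exp (-(Complex.I * (⟪x, k - l⟫ : ℂ))) := by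
    have hin : Continuous fun x : E2 => (⟪x, k - l⟫ : ℝ) := continuous_id.inner continuous_const
    exact Complex.continuous_exp.comp
      ((continuous_const.mul (Complex.continuous_ofReal.comp hin)).neg)
  have hsinc : Continuous fun x : E2 => Real.sin ⟪x, l⟫ :=
    Real.continuous_sin.comp (continuous_id.inner continuous_const)
  have hcosc : Continuous fun x : E2 => Real.cos ⟪x, l⟫ :=
    Real.continuous_cos.comp (continuous_id.inner continuous_const)
  -- first derivative
  have hd1 : deriv (fun t : ℝ => Gfun T φ k l (t : ℂ)) 0
      = (2 * Real.pi)⁻¹ • ∫ x : E2, Complex.exp (-(Complex.I * (⟪x, k⟫ : ℂ))) *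
          ((((fun y : E2 => 2 * Real.sin ⟪y, l⟫) x) * (fderiv ℝ T (x - gradient φ x) l) : ℝ) : ℂ) := by
    have hfun : (fun t : ℝ => Gfun T φ k l (t : ℂ))
        = fun t : ℝ => (2 * Real.pi)⁻¹ • ∫ x : E2,
            Complex.exp (-(Complex.I * (⟪x, k⟫ : ℂ))) *
              ((T (x - gradient φ x + (t * (fun y : E2 => 2 * Real.sin ⟪y, l⟫) x) • l) : ℝ) : ℂ) := by
      funext t
      unfold Gfun
      congr 1
      apply integral_congr_ae
      filter_upwards with x
      congr 2
      rw [gradient_pert, sub_eq_add_neg, ← neg_smul]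
      congr 1
      simp only [Complex.ofReal_re, Complex.ofReal_im]
      ring
    rw [hfun]
    exact (HasDerivAt.const_smul ((2 * Real.pi)⁻¹)
      (key T hT hTc φ hφ Mφ hbφ k l (fun y => 2 * Real.sin ⟪y, l⟫)
        (continuous_const.mul hsinc)
        (fun y => by
          rw [abs_mul, abs_two]
          nlinarith [abs_le.2 ⟨Real.neg_one_le_sin ⟪y, l⟫, Real.sin_le_one ⟪y, l⟫⟩]))).deriv
  -- second derivative
  have hd2 : deriv (fun t : ℝ => Gfun T φ k l ((t : ℂ) * Complex.I)) 0
      = (2 * Real.pi)⁻¹ • ∫ x : E2, Complex.exp (-(Complex.I * (⟪x, k⟫ : ℂ))) *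
          ((((fun y : E2 => 2 * Real.cos ⟪y, l⟫) x) * (fderiv ℝ T (x - gradient φ x) l) : ℝ) : ℂ) := by
    have hfun : (fun t : ℝ => Gfun T φ k l ((t : ℂ) * Complex.I))
        = fun t : ℝ => (2 * Real.pi)⁻¹ • ∫ x : E2,
            Complex.exp (-(Complex.I * (⟪x, k⟫ : ℂ))) *
              ((T (x - gradient φ x + (t * (fun y : E2 => 2 * Real.cos ⟪y, l⟫) x) • l) : ℝ) : ℂ) := by
      funext t
      unfold Gfun
      congr 1
      apply integral_congr_ae
      filter_upwards with x
      congr 2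
      rw [gradient_pert, sub_eq_add_neg, ← neg_smul]
      congr 1
      simp only [Complex.mul_re, Complex.mul_im, Complex.I_re, Complex.I_im,
        Complex.ofReal_re, Complex.ofReal_im]
      ring
    rw [hfun]
    exact (HasDerivAt.const_smul ((2 * Real.pi)⁻¹)
      (key T hT hTc φ hφ Mφ hbφ k l (fun y => 2 * Real.cos ⟪y, l⟫)
        (continuous_const.mul hcosc)
        (fun y => by
          rw [abs_mul, abs_two]
          nlinarith [abs_le.2 ⟨Real.neg_one_le_cos ⟪y, l⟫, Real.cos_le_one ⟪y, l⟫⟩]))).deriv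
  -- decomposition of the derivative
  have hB : ∀ x : E2, fderiv ℝ T (x - gradient φ x) l = ∑ q : Fin 2, l q * Aq T φ q x :=
    fun x => clm_apply_decomp _ l
  -- pointwise identity
  have hpt : ∀ x : E2,
      Complex.exp (-(Complex.I * (⟪x, k⟫ : ℂ))) *
          (((2 * Real.sin ⟪x, l⟫) * (fderiv ℝ T (x - gradient φ x) l) : ℝ) : ℂ)
        - Complex.I * (Complex.exp (-(Complex.I * (⟪x, k⟫ : ℂ))) *
          (((2 * Real.cos ⟪x, l⟫) * (fderiv ℝ T (x - gradient φ x) l) : ℝ) : ℂ))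
      = ∑ q : Fin 2, (-2 * Complex.I * ((l q : ℝ) : ℂ)) *
          (Complex.exp (-(Complex.I * (⟪x, k - l⟫ : ℂ))) * ((Aq T φ q x : ℝ) : ℂ)) := by
    intro x
    have hb : (⟪x, k - l⟫ : ℝ) = ⟪x, k⟫ - ⟪x, l⟫ := by
      rw [inner_sub_right]
    have hexp : Complex.exp (-(Complex.I * ((⟪x, k - l⟫ : ℝ) : ℂ)))
        = Complex.exp (-(Complex.I * ((⟪x, k⟫ : ℝ) : ℂ))) *
            Complex.exp (((⟪x, l⟫ : ℝ) : ℂ) * Complex.I) := by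
      rw [hb, ← Complex.exp_add]
      push_cast
      congr 1
      ring
    rw [trig_id (⟪x, l⟫) (fderiv ℝ T (x - gradient φ x) l)
        (Complex.exp (-(Complex.I * (⟪x, k⟫ : ℂ))))]
    simp only [hexp]
    have hBc' : ((fderiv ℝ T (x - gradient φ x) l : ℝ) : ℂ)
        = ∑ q : Fin 2, ((l q : ℝ) : ℂ) * ((Aq T φ q x : ℝ) : ℂ) := by
      rw [hB x]
      push_cast
      rfl
    rw [hBc', Fin.sum_univ_two, Fin.sum_univ_two]
    ring
  -- integrability
  have hD1int : Integrable (fun x : E2 => Complex.exp (-(Complex.I * (⟪x, k⟫ : ℂ))) *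
      (((2 * Real.sin ⟪x, l⟫) * (fderiv ℝ T (x - gradient φ x) l) : ℝ) : ℂ)) volume := by
    apply hint _ (hec.mul (Complex.continuous_ofReal.comp ((continuous_const.mul hsinc).mul hBc)))
    intro x hx
    simp only [Pi.mul_apply, Function.comp_apply]
    rw [hzero x hx]
    simp
  have hD2int : Integrable (fun x : E2 => Complex.exp (-(Complex.I * (⟪x, k⟫ : ℂ))) *
      (((2 * Real.cos ⟪x, l⟫) * (fderiv ℝ T (x - gradient φ x) l) : ℝ) : ℂ)) volume := by
    apply hint _ (hec.mul (Complex.continuous_ofReal.comp ((continuous_const.mul hcosc).mul hBc)))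
    intro x hx
    simp only [Pi.mul_apply, Function.comp_apply]
    rw [hzero x hx]
    simp
  have hAqc : ∀ q : Fin 2, Continuous (Aq T φ q) := by
    intro q
    have : Aq T φ q = fun x => fderiv ℝ T (x - gradient φ x) (EuclideanSpace.single q 1) := rfl
    rw [this]
    exact hfdc.clm_apply continuous_const
  have hfqint : ∀ q : Fin 2, Integrable (fun x : E2 =>
      Complex.exp (-(Complex.I * (⟪x, k - l⟫ : ℂ))) * ((Aq T φ q x : ℝ) : ℂ)) volume := by
    intro q
    apply hint _ (heklc.mul (Complex.continuous_ofReal.comp (hAqc q)))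
    intro x hx
    have : Aq T φ q x = 0 := by
      unfold Aq pderiv2
      rw [hzero x hx]
      simp
    simp only [Pi.mul_apply, Function.comp_apply]
    rw [this]
    simp
  -- main computation
  have hmain : (∫ x : E2, Complex.exp (-(Complex.I * (⟪x, k⟫ : ℂ))) *
        (((2 * Real.sin ⟪x, l⟫) * (fderiv ℝ T (x - gradient φ x) l) : ℝ) : ℂ))
      - Complex.I * (∫ x : E2, Complex.exp (-(Complex.I * (⟪x, k⟫ : ℂ))) *
        (((2 * Real.cos ⟪x, l⟫) * (fderiv ℝ T (x - gradient φ x) l) : ℝ) : ℂ))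
      = ∑ q : Fin 2, (-2 * Complex.I * ((l q : ℝ) : ℂ)) *
          ∫ x : E2, Complex.exp (-(Complex.I * (⟪x, k - l⟫ : ℂ))) * ((Aq T φ q x : ℝ) : ℂ) := by
    rw [← integral_const_mul, ← integral_sub hD1int (hD2int.const_mul _)]
    rw [show (fun x : E2 => Complex.exp (-(Complex.I * (⟪x, k⟫ : ℂ))) *
          (((2 * Real.sin ⟪x, l⟫) * (fderiv ℝ T (x - gradient φ x) l) : ℝ) : ℂ)
        - Complex.I * (Complex.exp (-(Complex.I * (⟪x, k⟫ : ℂ))) *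
          (((2 * Real.cos ⟪x, l⟫) * (fderiv ℝ T (x - gradient φ x) l) : ℝ) : ℂ)))
      = fun x : E2 => ∑ q : Fin 2, (-2 * Complex.I * ((l q : ℝ) : ℂ)) *
          (Complex.exp (-(Complex.I * (⟪x, k - l⟫ : ℂ))) * ((Aq T φ q x : ℝ) : ℂ))
      from funext hpt]
    rw [integral_finset_sum _ (fun q _ => ((hfqint q).const_mul _))]
    exact Finset.sum_congr rfl fun q _ => integral_const_mul _ _
  -- finish
  rw [hd1, hd2]
  have hftR : ∀ q : Fin 2, ftR (Aq T φ q) (k - l)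
      = (2 * Real.pi)⁻¹ • ∫ x : E2,
          Complex.exp (-(Complex.I * (⟪x, k - l⟫ : ℂ))) * ((Aq T φ q x : ℝ) : ℂ) :=
    fun q => rfl
  simp only [hftR, Complex.real_smul]
  calc ((2 * Real.pi)⁻¹ : ℝ) * (∫ x : E2, Complex.exp (-(Complex.I * (⟪x, k⟫ : ℂ))) *
        (((2 * Real.sin ⟪x, l⟫) * (fderiv ℝ T (x - gradient φ x) l) : ℝ) : ℂ))
      - Complex.I * (((2 * Real.pi)⁻¹ : ℝ) * ∫ x : E2, Complex.exp (-(Complex.I * (⟪x, k⟫ : ℂ))) *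
        (((2 * Real.cos ⟪x, l⟫) * (fderiv ℝ T (x - gradient φ x) l) : ℝ) : ℂ))
      = ((2 * Real.pi)⁻¹ : ℝ) * ((∫ x : E2, Complex.exp (-(Complex.I * (⟪x, k⟫ : ℂ))) *
        (((2 * Real.sin ⟪x, l⟫) * (fderiv ℝ T (x - gradient φ x) l) : ℝ) : ℂ))
      - Complex.I * (∫ x : E2, Complex.exp (-(Complex.I * (⟪x, k⟫ : ℂ))) *
        (((2 * Real.cos ⟪x, l⟫) * (fderiv ℝ T (x - gradient φ x) l) : ℝ) : ℂ))) := by ring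
    _ = ((2 * Real.pi)⁻¹ : ℝ) * ∑ q : Fin 2, (-2 * Complex.I * ((l q : ℝ) : ℂ)) *
          ∫ x : E2, Complex.exp (-(Complex.I * (⟪x, k - l⟫ : ℂ))) * ((Aq T φ q x : ℝ) : ℂ) := by
        rw [hmain]
    _ = -2 * ∑ q : Fin 2, Complex.I * ((l q : ℝ) : ℂ) *
          (((2 * Real.pi)⁻¹ : ℝ) * ∫ x : E2,
            Complex.exp (-(Complex.I * (⟪x, k - l⟫ : ℂ))) * ((Aq T φ q x : ℝ) : ℂ)) := by
        rw [Finset.mul_sum, Finset.mul_sum]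
        exact Finset.sum_congr rfl fun q _ => by ring
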